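/- Let p be an odd prime, l ≥ 1, n coprime to p, and let ψ be a self-map of S_{p^{-l}}(1) that is an isometry mapping each ball onto a ball of the same radius. If ψ is minimal on S_{p^{-l}}(1), then the normalized restriction of the Haar measure of Z_p to S_{p^{-l}}(1) is the unique ψ-invariant Borel probability measure on S_{p^{-l}}(1); in particular, for ψ = ψ_n with ψ_n(x) = x^n minimal, ψ_n is uniquely ergodic. -/

import Mathlib

open MeasureTheory

namespace Stmt17Aux

variable {p : ℕ} [hpp : Fact p.Prime] {l : ℕ}

abbrev Sph (p : ℕ) [Fact p.Prime] (l : ℕ) : Type :=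
  {x : ℤ_[p] // ‖x - 1‖ = (p : ℝ) ^ (-(l : ℤ))}

/-- closed ball of radius `p^{-m}` in the sphere -/
def bal (a : Sph p l) (m : ℕ) : Set (Sph p l) :=
  {x | dist x a ≤ (p : ℝ) ^ (-(m : ℤ))}

lemma one_lt_pR : (1 : ℝ) < p := by exact_mod_cast hpp.out.one_lt

lemma rad_pos (m : ℕ) : (0 : ℝ) < (p : ℝ) ^ (-(m : ℤ)) :=
  zpow_pos (by exact_mod_cast hpp.out.pos) _

lemma rad_lt_rad {m m' : ℕ} (h : m < m') : (p : ℝ) ^ (-(m' : ℤ)) < (p : ℝ) ^ (-(m : ℤ)) := by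
  apply zpow_lt_zpow_right₀ (one_lt_pR (p := p))
  omega

lemma mem_bal {a x : Sph p l} {m : ℕ} : x ∈ bal a m ↔ dist x a ≤ (p : ℝ) ^ (-(m : ℤ)) :=
  Iff.rfl

lemma bal_eq_of_dist_le {a b : Sph p l} {m : ℕ}
    (h : dist a b ≤ (p : ℝ) ^ (-(m : ℤ))) : bal a m = bal b m := by
  ext x
  simp only [mem_bal]
  constructor
  · intro hx
    exact le_trans (IsUltrametricDist.dist_triangle_max x a b) (max_le hx h)
  · intro hx
    refine le_trans (IsUltrametricDist.dist_triangle_max x b a) (max_le hx ?_)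
    rwa [dist_comm]


lemma isClosed_bal (a : Sph p l) (m : ℕ) : IsClosed (bal a m) :=
  Metric.isClosed_closedBall (x := a) (ε := (p : ℝ) ^ (-(m : ℤ)))

instance sphBorel [MeasurableSpace ℤ_[p]] [BorelSpace ℤ_[p]] : BorelSpace (Sph p l) :=
  Subtype.borelSpace {x : ℤ_[p] | ‖x - 1‖ = (p : ℝ) ^ (-(l : ℤ))}

lemma measurableSet_bal [MeasurableSpace ℤ_[p]] [BorelSpace ℤ_[p]] (a : Sph p l) (m : ℕ) :
    MeasurableSet (bal a m) :=
  (isClosed_bal a m).measurableSet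

lemma norm_nat_eq_one {j : ℕ} (hj : ¬ p ∣ j) : ‖(j : ℤ_[p])‖ = 1 := by
  refine le_antisymm (PadicInt.norm_le_one _) ?_
  by_contra h
  push_neg at h
  rw [show ((j : ℤ_[p])) = ((j : ℤ) : ℤ_[p]) by push_cast; ring] at h
  rw [PadicInt.norm_int_lt_one_iff_dvd] at h
  exact hj (by exact_mod_cast h)

lemma ctr_mem {j : ℕ} (hj : ¬ p ∣ j) :
    ‖(1 + (p : ℤ_[p]) ^ l * j) - 1‖ = (p : ℝ) ^ (-(l : ℤ)) := by
  rw [add_sub_cancel_left, norm_mul, norm_nat_eq_one hj, mul_one, PadicInt.norm_p_pow]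


/-- a total function giving centers of balls -/
noncomputable def ctr (p : ℕ) [Fact p.Prime] (l : ℕ) (j : ℕ) : Sph p l :=
  if hj : ¬ p ∣ j then ⟨1 + (p : ℤ_[p]) ^ l * j, ctr_mem hj⟩
  else ⟨1 + (p : ℤ_[p]) ^ l * 1, ctr_mem (Nat.Prime.not_dvd_one (Fact.out : p.Prime))⟩

lemma ctr_of_not_dvd {j : ℕ} (hj : ¬ p ∣ j) :
    (ctr p l j : ℤ_[p]) = 1 + (p : ℤ_[p]) ^ l * j := by
  simp [ctr, hj]


lemma dist_val (x y : Sph p l) : dist x y = ‖(x : ℤ_[p]) - y‖ := by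
  rw [Subtype.dist_eq, dist_eq_norm]

lemma cover (x : Sph p l) {k : ℕ} (hk : 1 ≤ k) :
    ∃ j : ℕ, j < p ^ k ∧ ¬ p ∣ j ∧ dist x (ctr p l j) ≤ (p : ℝ) ^ (-((l + k : ℕ) : ℤ)) := by
  set y : ℤ_[p] := (x : ℤ_[p]) - 1 with hy
  have hxnorm : ‖y‖ = (p : ℝ) ^ (-(l : ℤ)) := x.2
  set J : ℕ := y.appr (l + k) with hJ
  have hJlt : J < p ^ (l + k) := y.appr_lt (l + k)
  have hJnear : ‖y - (J : ℤ_[p])‖ ≤ (p : ℝ) ^ (-((l + k : ℕ) : ℤ)) :=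
    (PadicInt.norm_le_pow_iff_mem_span_pow _ _).mpr (y.appr_spec (l + k))
  have hlk : (p : ℝ) ^ (-((l + k : ℕ) : ℤ)) < (p : ℝ) ^ (-(l : ℤ)) := rad_lt_rad (by omega)
  have hne : ‖((J : ℤ_[p]) - y)‖ ≠ ‖y‖ := by
    rw [norm_sub_rev, hxnorm]
    exact ne_of_lt (lt_of_le_of_lt hJnear hlk)
  have hJnorm : ‖(J : ℤ_[p])‖ = (p : ℝ) ^ (-(l : ℤ)) := by
    have h2 : (J : ℤ_[p]) = y + ((J : ℤ_[p]) - y) := by ring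
    rw [h2, PadicInt.norm_add_eq_max_of_ne (fun h => hne h.symm), hxnorm]
    rw [max_eq_left]
    rw [norm_sub_rev]
    exact le_of_lt (lt_of_le_of_lt hJnear hlk)
  have hdvd : p ^ l ∣ J := by
    have : ‖((J : ℤ) : ℤ_[p])‖ ≤ (p : ℝ) ^ (-(l : ℤ)) := by
      push_cast; rw [hJnorm]
    rw [PadicInt.norm_int_le_pow_iff_dvd] at this
    exact_mod_cast this
  obtain ⟨j, hj⟩ := hdvd
  have hplpos : 0 < p ^ l := Nat.pow_pos hpp.out.pos
  refine ⟨j, ?_, ?_, ?_⟩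
  · have : p ^ l * j < p ^ l * p ^ k := by
      rw [← hj, ← pow_add]; exact hJlt
    exact lt_of_mul_lt_mul_left this (Nat.zero_le _)
  · intro hdj
    obtain ⟨i, hi⟩ := hdj
    have h1 : ((p : ℤ) ^ (l + 1)) ∣ (J : ℤ) := ⟨i, by push_cast [hj, hi]; ring⟩
    have h2 : ‖((J : ℤ) : ℤ_[p])‖ ≤ (p : ℝ) ^ (-((l + 1 : ℕ) : ℤ)) := by
      rw [PadicInt.norm_int_le_pow_iff_dvd]; exact_mod_cast h1
    have h3 : ((J : ℤ) : ℤ_[p]) = ((J : ℕ) : ℤ_[p]) := by push_cast; ring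
    rw [h3, hJnorm] at h2
    exact absurd h2 (not_le_of_gt (rad_lt_rad (by omega)))
  · have hjnd : ¬ p ∣ j := by
      intro hdj
      obtain ⟨i, hi⟩ := hdj
      have h1 : ((p : ℤ) ^ (l + 1)) ∣ (J : ℤ) := ⟨i, by push_cast [hj, hi]; ring⟩
      have h2 : ‖((J : ℤ) : ℤ_[p])‖ ≤ (p : ℝ) ^ (-((l + 1 : ℕ) : ℤ)) := by
        rw [PadicInt.norm_int_le_pow_iff_dvd]; exact_mod_cast h1
      have h3 : ((J : ℤ) : ℤ_[p]) = ((J : ℕ) : ℤ_[p]) := by push_cast; ring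
      rw [h3, hJnorm] at h2
      exact absurd h2 (not_le_of_gt (rad_lt_rad (by omega)))
    rw [dist_val, ctr_of_not_dvd hjnd]
    have heq : (x : ℤ_[p]) - (1 + (p : ℤ_[p]) ^ l * j) = y - (J : ℤ_[p]) := by
      have : ((J : ℕ) : ℤ_[p]) = (p : ℤ_[p]) ^ l * (j : ℤ_[p]) := by
        rw [hj]; push_cast; ring
      rw [hy, this]; ring
    rw [heq]
    exact hJnear


lemma ctr_inj {k j j' : ℕ} (hj : j < p ^ k) (hj' : j' < p ^ k)
    (hdj : ¬ p ∣ j) (hdj' : ¬ p ∣ j') (x : Sph p l)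
    (h1 : dist x (ctr p l j) ≤ (p : ℝ) ^ (-((l + k : ℕ) : ℤ)))
    (h2 : dist x (ctr p l j') ≤ (p : ℝ) ^ (-((l + k : ℕ) : ℤ))) : j = j' := by
  have hd : dist (ctr p l j) (ctr p l j') ≤ (p : ℝ) ^ (-((l + k : ℕ) : ℤ)) := by
    refine le_trans (IsUltrametricDist.dist_triangle_max _ x _) (max_le ?_ h2)
    rwa [dist_comm]
  rw [dist_val, ctr_of_not_dvd hdj, ctr_of_not_dvd hdj'] at hd
  have heq : (1 + (p : ℤ_[p]) ^ l * j) - (1 + (p : ℤ_[p]) ^ l * j') =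
      (p : ℤ_[p]) ^ l * (((j : ℤ) - (j' : ℤ) : ℤ) : ℤ_[p]) := by
    push_cast; ring
  rw [heq, norm_mul, PadicInt.norm_p_pow] at hd
  have hrad : (p : ℝ) ^ (-((l + k : ℕ) : ℤ)) = (p : ℝ) ^ (-(l : ℤ)) * (p : ℝ) ^ (-(k : ℤ)) := by
    rw [← zpow_add₀ (by exact_mod_cast hpp.out.pos.ne' : (p : ℝ) ≠ 0)]
    congr 1
    push_cast; ring
  rw [hrad] at hd
  have hz : ‖(((j : ℤ) - (j' : ℤ) : ℤ) : ℤ_[p])‖ ≤ (p : ℝ) ^ (-(k : ℤ)) := by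
    have hppos : (0 : ℝ) < (p : ℝ) ^ (-(l : ℤ)) := rad_pos l
    exact le_of_mul_le_mul_left (by simpa [mul_comm] using hd) hppos
  rw [show (-(k : ℤ)) = (-((k : ℕ) : ℤ)) from rfl, PadicInt.norm_int_le_pow_iff_dvd] at hz
  have hmod : (j : ℤ) % (p ^ k : ℤ) = (j' : ℤ) % (p ^ k : ℤ) :=
    Int.ModEq.symm (Int.modEq_iff_dvd.mpr hz)
  have hjm : (j : ℤ) % (p ^ k : ℤ) = (j : ℤ) := Int.emod_eq_of_lt (by positivity) (by exact_mod_cast hj)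
  have hjm' : (j' : ℤ) % (p ^ k : ℤ) = (j' : ℤ) := Int.emod_eq_of_lt (by positivity) (by exact_mod_cast hj')
  rw [hjm, hjm'] at hmod
  exact_mod_cast hmod

def Jk (p k : ℕ) : Finset ℕ := (Finset.range (p ^ k)).filter (fun j => ¬ p ∣ j)

lemma mem_Jk {k j : ℕ} : j ∈ Jk p k ↔ j < p ^ k ∧ ¬ p ∣ j := by
  simp [Jk]

lemma card_Jk {k : ℕ} (hk : 1 ≤ k) : (Jk p k).card = (p - 1) * p ^ (k - 1) := by
  have hppos : 0 < p := hpp.out.pos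
  have hsplit : p ^ k = p * p ^ (k - 1) := by
    conv_lhs => rw [show k = (k - 1) + 1 by omega]
    rw [pow_succ]; ring
  have himg : (Finset.range (p ^ k)).filter (fun j => p ∣ j) =
      (Finset.range (p ^ (k - 1))).image (fun i => p * i) := by
    ext j
    simp only [Finset.mem_filter, Finset.mem_range, Finset.mem_image]
    constructor
    · rintro ⟨hlt, i, rfl⟩
      rw [hsplit] at hlt
      exact ⟨i, Nat.lt_of_mul_lt_mul_left hlt, rfl⟩
    · rintro ⟨i, hi, rfl⟩
      exact ⟨by rw [hsplit]; exact (Nat.mul_lt_mul_left hppos).mpr hi, ⟨i, rfl⟩⟩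
  have hcard1 : ((Finset.range (p ^ k)).filter (fun j => p ∣ j)).card = p ^ (k - 1) := by
    rw [himg, Finset.card_image_of_injective _ (fun a b h => by
      exact Nat.eq_of_mul_eq_mul_left hppos h), Finset.card_range]
  have htot := Finset.card_filter_add_card_filter_not
    (s := Finset.range (p ^ k)) (p := fun j => p ∣ j)
  try simp only at htot
  rw [Finset.card_range, hcard1] at htot
  have hJc : (Jk p k).card = ((Finset.range (p ^ k)).filter (fun j => ¬ p ∣ j)).card := rfl
  have hfin : (Jk p k).card = p ^ k - p ^ (k - 1) := by omega
  rw [hfin, hsplit, Nat.sub_mul, one_mul]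


lemma bal_subset {a b : Sph p l} {m m' : ℕ} (hm : m ≤ m') (x : Sph p l)
    (hxa : x ∈ bal a m) (hxb : x ∈ bal b m') : bal b m' ⊆ bal a m := by
  intro y hy
  have hr : (p : ℝ) ^ (-(m' : ℤ)) ≤ (p : ℝ) ^ (-(m : ℤ)) := by
    rcases eq_or_lt_of_le hm with rfl | h
    · exact le_rfl
    · exact le_of_lt (rad_lt_rad h)
  have h1 : dist y x ≤ (p : ℝ) ^ (-(m : ℤ)) := by
    refine le_trans (IsUltrametricDist.dist_triangle_max y b x) (max_le (le_trans hy hr) ?_)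
    rw [dist_comm]
    exact le_trans hxb hr
  exact le_trans (IsUltrametricDist.dist_triangle_max y x a) (max_le h1 hxa)

def C (p : ℕ) [Fact p.Prime] (l : ℕ) : Set (Set (Sph p l)) :=
  {B | ∃ (a : Sph p l) (k : ℕ), 1 ≤ k ∧ B = bal a (l + k)}

lemma piSystem_C : IsPiSystem (C p l) := by
  rintro s ⟨a, k, hk, rfl⟩ t ⟨b, k', hk', rfl⟩ hne
  obtain ⟨x, hx1, hx2⟩ := hne
  rcases le_total k k' with h | h
  · rw [Set.inter_eq_self_of_subset_right
      (bal_subset (show l + k ≤ l + k' by omega) x hx1 hx2)]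
    exact ⟨b, k', hk', rfl⟩
  · rw [Set.inter_eq_self_of_subset_left
      (bal_subset (show l + k' ≤ l + k by omega) x hx2 hx1)]
    exact ⟨a, k, hk, rfl⟩

lemma exists_small_radius {ε : ℝ} (hε : 0 < ε) : ∃ k : ℕ, 1 ≤ k ∧
    (p : ℝ) ^ (-((l + k : ℕ) : ℤ)) < ε := by
  have hp1 : (1 : ℝ) < p := one_lt_pR
  obtain ⟨n, hn⟩ := exists_pow_lt_of_lt_one hε (by
    rw [inv_lt_one_iff₀]; right; exact hp1 : (p : ℝ)⁻¹ < 1)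
  refine ⟨n + 1, by omega, lt_of_le_of_lt ?_ hn⟩
  have hinv : ((p : ℝ)⁻¹) ^ n = (p : ℝ) ^ (-(n : ℤ)) := by
    rw [inv_pow, ← zpow_natCast, ← zpow_neg]
  rw [hinv]
  rcases Nat.eq_zero_or_pos (l + 1) with h | h
  · omega
  · exact le_of_lt (rad_lt_rad (by omega))

lemma gen_C [MeasurableSpace ℤ_[p]] [BorelSpace ℤ_[p]] :
    (inferInstance : MeasurableSpace (Sph p l)) = MeasurableSpace.generateFrom (C p l) := by
  refine le_antisymm ?_ (MeasurableSpace.generateFrom_le ?_)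
  · have hbor : (inferInstance : MeasurableSpace (Sph p l)) = borel (Sph p l) :=
      BorelSpace.measurable_eq
    rw [hbor, borel]
    refine MeasurableSpace.generateFrom_le ?_
    intro U hU
    rw [Set.mem_setOf_eq] at hU
    have hU' : U = ⋃ (k : ℕ) (j : ℕ)
        (_ : 1 ≤ k ∧ bal (ctr p l j) (l + k) ⊆ U), bal (ctr p l j) (l + k) := by
      ext x
      simp only [Set.mem_iUnion]
      constructor
      · intro hx
        obtain ⟨ε, hε, hball⟩ := Metric.isOpen_iff.mp hU x hx
        obtain ⟨k, hk, hrad⟩ := exists_small_radius (p := p) (l := l) hε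
        obtain ⟨j, _, _, hdist⟩ := cover x hk
        refine ⟨k, j, ⟨hk, ?_⟩, hdist⟩
        intro y hy
        apply hball
        rw [Metric.mem_ball]
        calc dist y x ≤ max (dist y (ctr p l j)) (dist (ctr p l j) x) :=
              IsUltrametricDist.dist_triangle_max _ _ _
          _ ≤ (p : ℝ) ^ (-((l + k : ℕ) : ℤ)) := max_le hy (by rw [dist_comm]; exact hdist)
          _ < ε := hrad
      · rintro ⟨k, j, ⟨hk, hsub⟩, hx⟩
        exact hsub hx
    rw [hU']
    refine MeasurableSet.iUnion fun k => MeasurableSet.iUnion fun j =>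
      MeasurableSet.iUnion fun h => ?_
    exact MeasurableSpace.measurableSet_generateFrom ⟨ctr p l j, k, h.1, rfl⟩
  · rintro B ⟨a, k, hk, rfl⟩
    exact measurableSet_bal a _

lemma card_ne_zero {k : ℕ} (hk : 1 ≤ k) : ((p - 1) * p ^ (k - 1) : ℕ) ≠ 0 := by
  have h1 := hpp.out.two_le
  have h2 : 0 < p ^ (k - 1) := Nat.pow_pos hpp.out.pos
  have h3 : 0 < p - 1 := by omega
  exact Nat.mul_ne_zero h3.ne' h2.ne'

lemma key [MeasurableSpace ℤ_[p]] [BorelSpace ℤ_[p]]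
    (ψ : Sph p l → Sph p l) (hiso : Isometry ψ)
    (hmin : ∀ x : Sph p l, Dense (Set.range fun N : ℕ => ψ^[N] x))
    (μ : Measure (Sph p l)) (hprob : IsProbabilityMeasure μ)
    (hpres : MeasurePreserving ψ μ μ) {k : ℕ} (hk : 1 ≤ k) (a : Sph p l) :
    μ (bal a (l + k)) = (((p - 1) * p ^ (k - 1) : ℕ) : ENNReal)⁻¹ := by
  have hpre : ∀ (b : Sph p l) (m : ℕ), ψ ⁻¹' bal (ψ b) m = bal b m := by
    intro b m
    ext z
    simp only [bal, Set.mem_preimage, Set.mem_setOf_eq, hiso.dist_eq]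
  have hstep : ∀ (b : Sph p l) (m : ℕ), μ (bal (ψ b) m) = μ (bal b m) := by
    intro b m
    rw [← hpre b m, hpres.measure_preimage (measurableSet_bal _ _).nullMeasurableSet]
  have hiter : ∀ (N : ℕ) (b : Sph p l) (m : ℕ), μ (bal (ψ^[N] b) m) = μ (bal b m) := by
    intro N
    induction N with
    | zero => intro b m; rfl
    | succ n ih =>
      intro b m
      rw [Function.iterate_succ_apply', hstep, ih]
  have hconst : ∀ b : Sph p l, μ (bal b (l + k)) = μ (bal a (l + k)) := by
    intro b
    have hb : (b : Sph p l) ∈ closure (Set.range fun N : ℕ => ψ^[N] a) :=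
      (hmin a) b
    rw [Metric.mem_closure_iff] at hb
    obtain ⟨z, ⟨N, rfl⟩, hz⟩ := hb _ (rad_pos (p := p) (l + k))
    have : bal (ψ^[N] a) (l + k) = bal b (l + k) := by
      apply bal_eq_of_dist_le
      rw [dist_comm]
      exact le_of_lt hz
    rw [← this, hiter]
  have hcover : (Set.univ : Set (Sph p l)) = ⋃ j ∈ Jk p k, bal (ctr p l j) (l + k) := by
    ext x
    simp only [Set.mem_univ, true_iff, Set.mem_iUnion]
    obtain ⟨j, hj1, hj2, hj3⟩ := cover x hk
    exact ⟨j, mem_Jk.mpr ⟨hj1, hj2⟩, hj3⟩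
  have hdisj : Set.PairwiseDisjoint (↑(Jk p k) : Set ℕ)
      (fun j => bal (ctr p l j) (l + k)) := by
    intro j hj j' hj' hne
    rw [Finset.mem_coe, mem_Jk] at hj hj'
    refine Set.disjoint_left.mpr fun x hx hx' => hne ?_
    exact ctr_inj hj.1 hj'.1 hj.2 hj'.2 x hx hx'
  have hsum : μ (⋃ j ∈ Jk p k, bal (ctr p l j) (l + k)) =
      ∑ j ∈ Jk p k, μ (bal (ctr p l j) (l + k)) :=
    measure_biUnion_finset hdisj fun j _ => measurableSet_bal _ _
  have hone : (1 : ENNReal) = ((Jk p k).card : ENNReal) * μ (bal a (l + k)) := by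
    have h1 : μ Set.univ = 1 := hprob.measure_univ
    rw [hcover, hsum] at h1
    rw [← h1]
    rw [Finset.sum_congr rfl (fun j _ => hconst (ctr p l j))]
    rw [Finset.sum_const, nsmul_eq_mul]
  have hcard := card_Jk (p := p) hk
  rw [hcard] at hone
  have hn0 : (((p - 1) * p ^ (k - 1) : ℕ) : ENNReal) ≠ 0 := by
    exact_mod_cast card_ne_zero hk
  have hnt : (((p - 1) * p ^ (k - 1) : ℕ) : ENNReal) ≠ ⊤ := ENNReal.natCast_ne_top _
  calc μ (bal a (l + k))
      = ((((p - 1) * p ^ (k - 1) : ℕ) : ENNReal)⁻¹ * (((p - 1) * p ^ (k - 1) : ℕ) : ENNReal)) *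
        μ (bal a (l + k)) := by rw [ENNReal.inv_mul_cancel hn0 hnt, one_mul]
    _ = (((p - 1) * p ^ (k - 1) : ℕ) : ENNReal)⁻¹ := by
        rw [mul_assoc, ← hone, mul_one]


def Sset (p : ℕ) [Fact p.Prime] (l : ℕ) : Set ℤ_[p] :=
  {x | ‖x - 1‖ = (p : ℝ) ^ (-(l : ℤ))}

lemma mem_Sset_of_close {a x : ℤ_[p]} (ha : a ∈ Sset p l)
    (hx : ‖x - a‖ < (p : ℝ) ^ (-(l : ℤ))) : x ∈ Sset p l := by
  have h1 : x - 1 = (a - 1) + (x - a) := by ring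
  have hne : ‖(a - 1 : ℤ_[p])‖ ≠ ‖(x - a : ℤ_[p])‖ := by
    rw [ha]; exact (ne_of_lt hx).symm
  show ‖x - 1‖ = (p : ℝ) ^ (-(l : ℤ))
  rw [h1, PadicInt.norm_add_eq_max_of_ne hne, ha]
  exact max_eq_left (le_of_lt hx)

lemma isOpen_Sset : IsOpen (Sset p l) := by
  rw [Metric.isOpen_iff]
  intro a ha
  refine ⟨(p : ℝ) ^ (-(l : ℤ)), rad_pos l, fun x hx => ?_⟩
  rw [Metric.mem_ball, dist_eq_norm] at hx
  exact mem_Sset_of_close ha hx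

lemma isClosed_Sset : IsClosed (Sset p l) := by
  have : Sset p l = (fun x : ℤ_[p] => ‖x - 1‖) ⁻¹' {(p : ℝ) ^ (-(l : ℤ))} := rfl
  rw [this]
  exact (isClosed_singleton).preimage ((continuous_id.sub continuous_const).norm)

instance sphCompact : CompactSpace (Sph p l) :=
  isCompact_iff_compactSpace.mp ((isClosed_Sset (p := p) (l := l)).isCompact)

lemma surj_of_min (ψ : Sph p l → Sph p l) (hiso : Isometry ψ)
    (hmin : ∀ x : Sph p l, Dense (Set.range fun N : ℕ => ψ^[N] x)) :
    Function.Surjective ψ := by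
  intro y
  by_contra hy
  have hcl : IsClosed (Set.range ψ) := (isCompact_range hiso.continuous).isClosed
  have hF : IsClosed (Set.range ψ ∪ {y}) := hcl.union isClosed_singleton
  have hsub : (Set.range fun N : ℕ => ψ^[N] y) ⊆ Set.range ψ ∪ {y} := by
    rintro w ⟨N, rfl⟩
    cases N with
    | zero => exact Or.inr rfl
    | succ n => exact Or.inl ⟨ψ^[n] y, (Function.iterate_succ_apply' ψ n y).symm⟩
  have huniv : Set.range ψ ∪ {y} = Set.univ := by
    have hd : Dense (Set.range ψ ∪ {y}) := (hmin y).mono hsub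
    rw [← hF.closure_eq]
    exact hd.closure_eq
  have hyeq : ({y} : Set (Sph p l)) = (Set.range ψ)ᶜ := by
    apply Set.eq_of_subset_of_subset
    · rintro w rfl
      simpa using fun x hx => hy ⟨x, hx⟩
    · intro w hw
      rcases huniv ▸ Set.mem_univ w with h | h
      · exact absurd h hw
      · exact h
  have hyopen : IsOpen ({y} : Set (Sph p l)) := by
    rw [hyeq]; exact hcl.isOpen_compl
  obtain ⟨ε, hε, hball⟩ := Metric.isOpen_iff.mp hyopen y rfl
  obtain ⟨k, hk1, hrad⟩ := exists_small_radius (p := p) (l := l) hε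
  have hz_mem : ‖((y : ℤ_[p]) + (p : ℤ_[p]) ^ (l + k)) - 1‖ = (p : ℝ) ^ (-(l : ℤ)) := by
    have h1 : (y : ℤ_[p]) + (p : ℤ_[p]) ^ (l + k) - 1 =
        ((y : ℤ_[p]) - 1) + (p : ℤ_[p]) ^ (l + k) := by ring
    have hne : ‖((y : ℤ_[p]) - 1)‖ ≠ ‖((p : ℤ_[p]) ^ (l + k))‖ := by
      rw [y.2, PadicInt.norm_p_pow]
      exact (ne_of_gt (rad_lt_rad (by omega)))
    rw [h1, PadicInt.norm_add_eq_max_of_ne hne, y.2, PadicInt.norm_p_pow]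
    exact max_eq_left (le_of_lt (rad_lt_rad (by omega)))
  set z : Sph p l := ⟨(y : ℤ_[p]) + (p : ℤ_[p]) ^ (l + k), hz_mem⟩ with hz
  have hzy : z ≠ y := by
    intro h
    have h2 : (y : ℤ_[p]) + (p : ℤ_[p]) ^ (l + k) = (y : ℤ_[p]) := congrArg Subtype.val h
    have h3 : ((p : ℤ_[p]) ^ (l + k)) = 0 := by
      have := congrArg (fun w => w - (y : ℤ_[p])) h2
      simpa using this
    have h4 : ‖((p : ℤ_[p]) ^ (l + k))‖ = 0 := by rw [h3, norm_zero]
    rw [PadicInt.norm_p_pow] at h4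
    exact absurd h4 (ne_of_gt (rad_pos _))
  have hzball : z ∈ Metric.ball y ε := by
    rw [Metric.mem_ball, dist_val]
    have : (z : ℤ_[p]) - (y : ℤ_[p]) = (p : ℤ_[p]) ^ (l + k) := by
      rw [hz]; ring
    rw [this, PadicInt.norm_p_pow]
    exact hrad
  exact hzy (hball hzball)

section HaarPart

variable [MeasurableSpace ℤ_[p]] [BorelSpace ℤ_[p]]

lemma exists_invariant (ψ : Sph p l → Sph p l) (hiso : Isometry ψ)
    (hmin : ∀ x : Sph p l, Dense (Set.range fun N : ℕ => ψ^[N] x)) :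
    ∃ μ : Measure (Sph p l), IsProbabilityMeasure μ ∧ MeasurePreserving ψ μ μ := by
  classical
  haveI : Nonempty ℤ_[p] := ⟨0⟩
  set μH : Measure ℤ_[p] := Measure.addHaarMeasure ⊤ with hμH
  have hHuniv : μH Set.univ = 1 := by
    have := Measure.addHaarMeasure_self (K₀ := (⊤ : TopologicalSpace.PositiveCompacts ℤ_[p]))
    rwa [TopologicalSpace.PositiveCompacts.coe_top] at this
  haveI : IsFiniteMeasure μH := ⟨by rw [hHuniv]; exact ENNReal.one_lt_top⟩
  haveI : NeZero μH := ⟨by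
    intro h
    rw [h] at hHuniv
    simp at hHuniv⟩
  -- ball sets in ℤ_[p]
  set ZB : ℤ_[p] → ℕ → Set ℤ_[p] := fun a m => {x | ‖x - a‖ ≤ (p : ℝ) ^ (-(m : ℤ))} with hZB
  have hZBclosed : ∀ a m, IsClosed (ZB a m) := by
    intro a m
    have : ZB a m = Metric.closedBall a ((p : ℝ) ^ (-(m : ℤ))) := by
      ext x; simp [hZB, Metric.mem_closedBall, dist_eq_norm]
    rw [this]
    exact Metric.isClosed_closedBall
  have hZBmeas : ∀ a m, MeasurableSet (ZB a m) := fun a m => (hZBclosed a m).measurableSet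
  have htrans : ∀ (a b : ℤ_[p]) (m : ℕ), μH (ZB a m) = μH (ZB b m) := by
    intro a b m
    have hpre : (fun x => (b - a) + x) ⁻¹' (ZB b m) = ZB a m := by
      ext x
      simp only [hZB, Set.mem_preimage, Set.mem_setOf_eq]
      constructor
      · intro h; convert h using 2; ring
      · intro h; convert h using 2; ring
    rw [← hpre, measure_preimage_add]
  -- the sphere has positive finite measure
  have hS0 : μH (Sset p l) ≠ 0 := by
    refine (ne_of_gt ((isOpen_Sset (p := p) (l := l)).measure_pos μH ?_))
    refine ⟨1 + (p : ℤ_[p]) ^ l, ?_⟩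
    show ‖(1 + (p : ℤ_[p]) ^ l) - 1‖ = (p : ℝ) ^ (-(l : ℤ))
    rw [add_sub_cancel_left, PadicInt.norm_p_pow]
  have hSfin : μH (Sset p l) ≠ ⊤ := by
    exact (lt_of_le_of_lt (measure_mono (Set.subset_univ _)) (by rw [hHuniv]; exact ENNReal.one_lt_top)).ne
  -- transfer to the subtype
  have hSmeas : MeasurableSet (Sset p l) := (isClosed_Sset (p := p) (l := l)).measurableSet
  have hemb : MeasurableEmbedding ((↑) : (Sset p l) → ℤ_[p]) :=
    MeasurableEmbedding.subtype_coe hSmeas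
  set ν : Measure (Sph p l) := Measure.comap (fun x : Sph p l => (x : ℤ_[p])) μH with hν
  have hνap : ∀ s : Set (Sph p l), ν s = μH ((fun x : Sph p l => (x : ℤ_[p])) '' s) := by
    intro s
    exact hemb.comap_apply μH s
  set μ : Measure (Sph p l) := (μH (Sset p l))⁻¹ • ν with hμ
  -- image of balls
  have himg : ∀ (a : Sph p l) (k : ℕ), 1 ≤ k →
      (fun x : Sph p l => (x : ℤ_[p])) '' (bal a (l + k)) = ZB (a : ℤ_[p]) (l + k) := by
    intro a k hk
    apply Set.eq_of_subset_of_subset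
    · rintro w ⟨x, hx, rfl⟩
      rw [mem_bal, dist_val] at hx
      exact hx
    · intro w hw
      have hws : w ∈ Sset p l := by
        apply mem_Sset_of_close a.2
        exact lt_of_le_of_lt hw (rad_lt_rad (by omega))
      refine ⟨⟨w, hws⟩, ?_, rfl⟩
      rw [mem_bal, dist_val]
      exact hw
  have hμbal : ∀ (a b : Sph p l) (k : ℕ), 1 ≤ k →
      μ (bal a (l + k)) = μ (bal b (l + k)) := by
    intro a b k hk
    rw [hμ]
    simp only [Measure.smul_apply, smul_eq_mul]
    rw [hνap, hνap, himg a k hk, himg b k hk, htrans (a : ℤ_[p]) (b : ℤ_[p])]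
  -- μ is a probability measure
  have hμuniv : μ Set.univ = 1 := by
    rw [hμ]
    simp only [Measure.smul_apply, smul_eq_mul]
    rw [hνap]
    have : (fun x : Sph p l => (x : ℤ_[p])) '' Set.univ = Sset p l := by
      rw [Set.image_univ]
      exact Subtype.range_coe_subtype
    rw [this]
    exact ENNReal.inv_mul_cancel hS0 hSfin
  haveI hμprob : IsProbabilityMeasure μ := ⟨hμuniv⟩
  -- invariance
  have hsurj := surj_of_min (p := p) (l := l) ψ hiso hmin
  have hmeasψ : Measurable ψ := hiso.continuous.measurable
  have hpre : ∀ (b : Sph p l) (m : ℕ), ψ ⁻¹' bal (ψ b) m = bal b m := by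
    intro b m
    ext w
    simp only [bal, Set.mem_preimage, Set.mem_setOf_eq, hiso.dist_eq]
  refine ⟨μ, hμprob, hmeasψ, ?_⟩
  haveI : IsFiniteMeasure (Measure.map ψ μ) := by
    constructor
    rw [Measure.map_apply hmeasψ MeasurableSet.univ, Set.preimage_univ, hμuniv]
    exact ENNReal.one_lt_top
  refine ext_of_generate_finite (C p l) (gen_C (p := p) (l := l)) (piSystem_C (p := p) (l := l))
    ?_ ?_
  · rintro B ⟨a, k, hk, rfl⟩
    obtain ⟨b, rfl⟩ := hsurj a
    rw [Measure.map_apply hmeasψ (measurableSet_bal _ _), hpre b (l + k)]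
    exact hμbal b (ψ b) k hk
  · rw [Measure.map_apply hmeasψ MeasurableSet.univ, Set.preimage_univ]

end HaarPart

end Stmt17Aux

theorem stmt_17 (p : ℕ) [Fact p.Prime] (hp : p ≠ 2) (l : ℕ) (hl : 1 ≤ l)
    [MeasurableSpace ℤ_[p]] [BorelSpace ℤ_[p]]
    (ψ : {x : ℤ_[p] // ‖x - 1‖ = (p : ℝ) ^ (-(l : ℤ))} →
         {x : ℤ_[p] // ‖x - 1‖ = (p : ℝ) ^ (-(l : ℤ))})
    (hiso : Isometry ψ)
    (hball : ∀ (a : {x : ℤ_[p] // ‖x - 1‖ = (p : ℝ) ^ (-(l : ℤ))}) (m : ℕ),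
      ψ '' {x | dist x a ≤ (p : ℝ) ^ (-(m : ℤ))}
        = {x | dist x (ψ a) ≤ (p : ℝ) ^ (-(m : ℤ))})
    (hmin : ∀ x : {x : ℤ_[p] // ‖x - 1‖ = (p : ℝ) ^ (-(l : ℤ))},
      Dense (Set.range fun N : ℕ => ψ^[N] x)) :
    (∃! μ : Measure {x : ℤ_[p] // ‖x - 1‖ = (p : ℝ) ^ (-(l : ℤ))},
        IsProbabilityMeasure μ ∧ MeasurePreserving ψ μ μ) ∧
    (∀ μ : Measure {x : ℤ_[p] // ‖x - 1‖ = (p : ℝ) ^ (-(l : ℤ))},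
        IsProbabilityMeasure μ → MeasurePreserving ψ μ μ →
        ∀ k : ℕ, 1 ≤ k → ∀ a : {x : ℤ_[p] // ‖x - 1‖ = (p : ℝ) ^ (-(l : ℤ))},
          μ {x | dist x a ≤ (p : ℝ) ^ (-(l + k : ℤ))}
            = (((p - 1) * p ^ (k - 1) : ℕ) : ENNReal)⁻¹) := by
  have hsetEq : ∀ (a : Stmt17Aux.Sph p l) (k : ℕ),
      {x : Stmt17Aux.Sph p l | dist x a ≤ (p : ℝ) ^ (-(l + k : ℤ))}
        = Stmt17Aux.bal a (l + k) := by
    intro a k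
    have hexp : (-(((l + k : ℕ)) : ℤ)) = -((l : ℤ) + (k : ℤ)) := by push_cast; ring
    simp only [Stmt17Aux.bal, hexp]
  obtain ⟨μ0, hμ0prob, hμ0pres⟩ := Stmt17Aux.exists_invariant (p := p) (l := l) ψ hiso hmin
  constructor
  · refine ⟨μ0, ⟨hμ0prob, hμ0pres⟩, ?_⟩
    rintro ν ⟨hν1, hν2⟩
    haveI := hν1
    haveI := hμ0prob
    refine ext_of_generate_finite _ (Stmt17Aux.gen_C (p := p) (l := l))
      (Stmt17Aux.piSystem_C (p := p) (l := l)) ?_ ?_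
    · rintro B ⟨a, k, hk, rfl⟩
      rw [Stmt17Aux.key ψ hiso hmin ν hν1 hν2 hk a,
        Stmt17Aux.key ψ hiso hmin μ0 hμ0prob hμ0pres hk a]
    · rw [hν1.measure_univ, hμ0prob.measure_univ]
  · intro μ h1 h2 k hk a
    rw [hsetEq a k]
    exact Stmt17Aux.key ψ hiso hmin μ h1 h2 hk a
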